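/- Suppose the system Σ is observable and let R(ξ) be an N×N polynomial matrix over ℂ such that the behavior B equals the set of trajectories y : ℕ → ℂ^N with R(σ)y = 0. Then δ(Σ) equals the smallest integer L ∈ {1,…,N} for which there exists a subset J ⊆ {1,…,N} of cardinality L such that the N×L submatrix R_J(ξ), consisting of the columns of R(ξ) with indices in J, is not left unimodular (i.e., has no polynomial left inverse). -/

import Mathlib

open Matrix

/-- The behavior of the LTI system Σ = (A, C): all output trajectories
`y(t) = C A^t x₀` for some initial condition `x₀`. -/
def behavior {n N : ℕ} (A : Matrix (Fin n) (Fin n) ℂ) (C : Matrix (Fin N) (Fin n) ℂ) :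
    Set (ℕ → Fin N → ℂ) :=
  { y | ∃ x₀ : Fin n → ℂ, ∀ t, y t = (C * A ^ t).mulVec x₀ }

/-- Observability of Σ = (A, C): the map `x₀ ↦ (C A^t x₀)ₜ` is injective. -/
def Observable {n N : ℕ} (A : Matrix (Fin n) (Fin n) ℂ) (C : Matrix (Fin N) (Fin n) ℂ) : Prop :=
  Function.Injective (fun x₀ : Fin n → ℂ => fun t : ℕ => (C * A ^ t).mulVec x₀)

/-- The weight `‖y‖` of a trajectory: the number of component trajectories
that are not identically zero. -/
noncomputable def weight {N : ℕ} (y : ℕ → Fin N → ℂ) : ℕ :=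
  Set.ncard {i : Fin N | ∃ t, y t i ≠ 0}

/-- The security index `δ(Σ) = min { ‖y‖ : y ∈ B, y ≠ 0 }`. -/
noncomputable def secIndex {n N : ℕ} (A : Matrix (Fin n) (Fin n) ℂ)
    (C : Matrix (Fin N) (Fin n) ℂ) : ℕ :=
  sInf {w : ℕ | ∃ y ∈ behavior A C, y ≠ 0 ∧ w = weight y}

/-- The action `R(σ) y` of a polynomial matrix `R(ξ)` on a trajectory `y`,
where `σ` is the left shift: `(R(σ)y)_i(t) = Σ_j Σ_k (R_{ij})_k · y_j(t+k)`. -/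
noncomputable def polyAct {N : ℕ} (R : Matrix (Fin N) (Fin N) (Polynomial ℂ))
    (y : ℕ → Fin N → ℂ) : ℕ → Fin N → ℂ :=
  fun t i => ∑ j, (R i j).sum fun k a => a * y (t + k) j

noncomputable section SecAuxSec
open Polynomial
namespace SecAux

variable {I J K : Type*}

/-- The left-shift endomorphism on trajectories. -/
def shiftE : Module.End ℂ (ℕ → ℂ) where
  toFun z := fun t => z (t + 1)
  map_add' _ _ := rfl
  map_smul' _ _ := rfl

lemma shiftE_pow (k : ℕ) (z : ℕ → ℂ) (t : ℕ) : (shiftE ^ k) z t = z (t + k) := by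
  induction k generalizing z t with
  | zero => rfl
  | succ k ih =>
    rw [pow_succ, Module.End.mul_apply, ih]
    show z (t + k + 1) = _
    ring_nf

/-- Applying `p(σ)` to a trajectory, coefficientwise formula. -/
lemma aeval_shiftE_apply (p : ℂ[X]) (z : ℕ → ℂ) (t : ℕ) :
    (aeval shiftE p) z t = p.sum fun k a => a * z (t + k) := by
  induction p using Polynomial.induction_on' with
  | add p q hp hq =>
    rw [map_add, LinearMap.add_apply, Pi.add_apply, hp, hq,
      Polynomial.sum_add_index _ _ _ (fun n => by simp) (fun n a b => by ring)]
  | monomial n a =>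
    rw [Polynomial.aeval_monomial, Module.End.mul_apply,
      Polynomial.sum_monomial_index _ _ (by simp)]
    have : (algebraMap ℂ (Module.End ℂ (ℕ → ℂ)) a) ((shiftE ^ n) z) t
        = a * ((shiftE ^ n) z) t := by
      simp [Module.algebraMap_end_apply]
    rw [this, shiftE_pow]


/-- Rectangular polynomial matrix action on trajectories. -/
def polyActR [Fintype J] (M : Matrix I J ℂ[X]) (y : ℕ → J → ℂ) : ℕ → I → ℂ :=
  fun t i => ∑ j, (aeval shiftE (M i j)) (fun s => y s j) t

lemma polyActR_zero [Fintype J] (M : Matrix I J ℂ[X]) : polyActR M 0 = 0 := by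
  funext t i
  have h : ∀ j : J, (fun s : ℕ => (0 : ℕ → J → ℂ) s j) = (0 : ℕ → ℂ) := fun j => rfl
  simp only [polyActR, h, map_zero]
  simp

lemma polyActR_one [Fintype J] [DecidableEq J] (y : ℕ → J → ℂ) : polyActR 1 y = y := by
  funext t j0
  simp only [polyActR, Matrix.one_apply]
  rw [Finset.sum_eq_single j0]
  · simp
  · intro b _ hb
    simp [Ne.symm hb]
  · simp

lemma polyActR_mul [Fintype I] [Fintype J] (S : Matrix K I ℂ[X]) (M : Matrix I J ℂ[X])
    (y : ℕ → J → ℂ) : polyActR (S * M) y = polyActR S (polyActR M y) := by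
  funext t k
  have hcol : ∀ i : I, (fun s : ℕ => polyActR M y s i)
      = ∑ j : J, (aeval shiftE (M i j)) (fun s => y s j) := by
    intro i; funext s
    simp [polyActR, Finset.sum_apply]
  calc polyActR (S * M) y t k
      = ∑ j : J, (aeval shiftE (∑ i : I, S k i * M i j)) (fun s => y s j) t := by
        simp [polyActR, Matrix.mul_apply]
    _ = ∑ j : J, ∑ i : I, (aeval shiftE (S k i)) ((aeval shiftE (M i j)) (fun s => y s j)) t := by
        refine Finset.sum_congr rfl fun j _ => ?_
        rw [map_sum]
        simp only [LinearMap.coe_sum, Finset.sum_apply]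
        refine Finset.sum_congr rfl fun i _ => ?_
        rw [_root_.map_mul, Module.End.mul_apply]
    _ = ∑ i : I, ∑ j : J, (aeval shiftE (S k i)) ((aeval shiftE (M i j)) (fun s => y s j)) t :=
        Finset.sum_comm
    _ = ∑ i : I, (aeval shiftE (S k i)) (∑ j : J, (aeval shiftE (M i j)) (fun s => y s j)) t := by
        refine Finset.sum_congr rfl fun i _ => ?_
        rw [map_sum]
        simp [Finset.sum_apply]
    _ = polyActR S (polyActR M y) t k := by
        simp only [polyActR]
        refine Finset.sum_congr rfl fun i _ => ?_
        have harg : (fun s => ∑ j : J, ((aeval shiftE) (M i j)) (fun s => y s j) s)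
            = ∑ j : J, ((aeval shiftE) (M i j)) fun s => y s j :=
          funext fun s => (Finset.sum_apply _ _ _).symm
        rw [harg]


/-- If an `N × J` complex matrix is injective (as `mulVec`), then some square
row-submatrix has nonzero determinant. -/
lemma exists_det_ne_zero {N : ℕ} {J : Type*} [Fintype J] [DecidableEq J]
    (V : Matrix (Fin N) J ℂ) (h : Function.Injective V.mulVec) :
    ∃ r : J → Fin N, (V.submatrix r id).det ≠ 0 := by
  classical
  -- rows span everything
  have hspan : Submodule.span ℂ (Set.range fun i : Fin N => V i) = ⊤ := by
    by_contra hne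
    obtain ⟨φ, φne, hφ⟩ := Submodule.exists_dual_map_eq_bot_of_lt_top
      (lt_top_iff_ne_top.2 hne) inferInstance
    set v : J → ℂ := fun j => φ (fun j' => if j = j' then 1 else 0) with hv
    have hφx : ∀ x : J → ℂ, φ x = ∑ j, x j * v j := by
      intro x
      conv_lhs => rw [pi_eq_sum_univ x]
      rw [map_sum]
      exact Finset.sum_congr rfl fun j _ => by rw [_root_.map_smul, smul_eq_mul]
    have hv0 : v ≠ 0 := by
      intro hveq
      refine φne (LinearMap.ext fun x => ?_)
      rw [hφx x, hveq]
      simp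
    have hmul : V.mulVec v = 0 := by
      funext i
      have hmem : φ (V i) ∈ (Submodule.span ℂ (Set.range fun i : Fin N => V i)).map φ :=
        Submodule.mem_map_of_mem (Submodule.subset_span ⟨i, rfl⟩)
      rw [hφ] at hmem
      have hz : φ (V i) = 0 := hmem
      show (V *ᵥ v) i = 0
      calc (V *ᵥ v) i = ∑ j, V i j * v j := rfl
        _ = φ (V i) := (hφx (V i)).symm
        _ = 0 := hz
    exact hv0 (h (by rw [hmul, Matrix.mulVec_zero]))
  -- extract a basis among the rows
  obtain ⟨b, hb_sub, hb_span, hb_li⟩ :=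
    exists_linearIndependent ℂ (Set.range fun i : Fin N => V i)
  rw [hspan] at hb_span
  let B : Module.Basis b ℂ (J → ℂ) := Module.Basis.mk hb_li (by rw [Subtype.range_coe, hb_span])
  haveI : Fintype b := FiniteDimensional.fintypeBasisIndex B
  let e : b ≃ J := B.indexEquiv (Pi.basisFun ℂ J)
  have hchoice : ∀ j : J, ∃ i : Fin N, V i = ((e.symm j : b) : J → ℂ) := by
    intro j
    obtain ⟨i, hi⟩ := hb_sub (e.symm j).2
    exact ⟨i, hi⟩
  choose r hr using hchoice
  refine ⟨r, fun hdet => ?_⟩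
  obtain ⟨w, hw0, hwmul⟩ := Matrix.exists_vecMul_eq_zero_iff.2 hdet
  have hli : LinearIndependent ℂ fun j : J => V (r j) := by
    have : (fun j : J => V (r j)) = fun j : J => ((e.symm j : b) : J → ℂ) := funext hr
    rw [this]
    exact hb_li.comp _ (Equiv.injective _)
  have : ∀ j, w j = 0 := by
    have hsum : ∑ j, w j • V (r j) = 0 := by
      funext j'
      have := congrFun hwmul j'
      simpa [Matrix.vecMul, dotProduct, Finset.sum_apply] using this
    exact Fintype.linearIndependent_iff.1 hli w hsum
  exact hw0 (funext this)


/-- Dichotomy: a rectangular polynomial matrix either has a polynomial left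
inverse, or a common zero. -/
lemma left_inv_or_zero {N : ℕ} {J : Type*} [Fintype J] [DecidableEq J]
    (M : Matrix (Fin N) J ℂ[X]) :
    (∃ S : Matrix J (Fin N) ℂ[X], S * M = 1) ∨
    (∃ (l : ℂ) (v : J → ℂ), v ≠ 0 ∧ (M.map (eval l)).mulVec v = 0) := by
  classical
  set D : (J → Fin N) → ℂ[X] := fun r => (M.submatrix r id).det with hD
  by_cases hI : Ideal.span (Set.range D) = ⊤
  · left
    have h1 : (1 : ℂ[X]) ∈ Ideal.span (Set.range D) := hI ▸ Submodule.mem_top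
    rw [Ideal.span, Submodule.mem_span_range_iff_exists_fun] at h1
    obtain ⟨c, hc⟩ := h1
    refine ⟨∑ r : J → Fin N, c r • ((M.submatrix r id).adjugate *
      (1 : Matrix (Fin N) (Fin N) ℂ[X]).submatrix r id), ?_⟩
    have hPrM : ∀ r : J → Fin N,
        (1 : Matrix (Fin N) (Fin N) ℂ[X]).submatrix r id * M = M.submatrix r id := by
      intro r
      ext j j'
      simp [Matrix.mul_apply, Matrix.one_apply, Matrix.submatrix_apply, ite_mul]
    rw [Matrix.sum_mul]
    have : ∀ r : J → Fin N,
        c r • ((M.submatrix r id).adjugate * (1 : Matrix (Fin N) (Fin N) ℂ[X]).submatrix r id) * M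
          = (c r * D r) • (1 : Matrix J J ℂ[X]) := by
      intro r
      rw [Matrix.smul_mul, Matrix.mul_assoc, hPrM r, Matrix.adjugate_mul, hD, smul_smul]
    rw [Finset.sum_congr rfl fun r _ => this r, ← Finset.sum_smul]
    have hc' : ∑ r : J → Fin N, c r * D r = 1 := by
      rw [← hc]; exact Finset.sum_congr rfl fun r _ => smul_eq_mul ..
    rw [hc', one_smul]
  · right
    -- find a common root of all the maximal minors
    have : ∃ l : ℂ, ∀ r : J → Fin N, (D r).eval l = 0 := by
      obtain ⟨g, hg⟩ := Submodule.IsPrincipal.principal (Ideal.span (Set.range D))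
      have hgmem : ∀ r : J → Fin N, g ∣ D r := by
        intro r
        have : D r ∈ Ideal.span (Set.range D) := Ideal.subset_span ⟨r, rfl⟩
        rw [hg] at this
        exact (Ideal.mem_span_singleton).1 this
      have hgnu : ¬ IsUnit g := fun hu => hI (hg.trans (Ideal.span_singleton_eq_top.2 hu))
      by_cases hg0 : g = 0
      · refine ⟨0, fun r => ?_⟩
        obtain ⟨h, hh⟩ := hgmem r
        rw [hh, hg0, zero_mul, eval_zero]
      · have hdeg : 0 < g.degree := by
          rcases lt_or_eq_of_le (Polynomial.zero_le_degree_iff.2 hg0) with h | h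
          · exact h
          · exact absurd (Polynomial.isUnit_iff_degree_eq_zero.2 h.symm) hgnu
        obtain ⟨l, hl⟩ := Complex.exists_root hdeg
        refine ⟨l, fun r => ?_⟩
        obtain ⟨h, hh⟩ := hgmem r
        rw [hh, eval_mul, show eval l g = 0 from hl, zero_mul]
    obtain ⟨l, hl⟩ := this
    have hnotinj : ¬ Function.Injective (M.map (eval l)).mulVec := by
      intro hinj
      obtain ⟨r, hr⟩ := exists_det_ne_zero (M.map (eval l)) hinj
      apply hr
      rw [Matrix.submatrix_map]
      have heq : (M.submatrix r id).map (eval l) = (evalRingHom l).mapMatrix (M.submatrix r id) :=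
        rfl
      rw [heq, ← RingHom.map_det]
      exact hl r
    rw [Function.not_injective_iff] at hnotinj
    obtain ⟨a, b, hab, hne⟩ := hnotinj
    refine ⟨l, a - b, sub_ne_zero.2 hne, ?_⟩
    rw [Matrix.mulVec_sub, hab, sub_self]


/-- a polynomial acting on an exponential trajectory -/
lemma sum_exp (p : ℂ[X]) (l c : ℂ) (t : ℕ) :
    (p.sum fun k a => a * (l ^ (t + k) * c)) = p.eval l * (l ^ t * c) := by
  rw [Polynomial.eval_eq_sum, Polynomial.sum_def, Polynomial.sum_def, Finset.sum_mul]
  exact Finset.sum_congr rfl fun k _ => by rw [pow_add]; ring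


lemma polyAct_eq {N : ℕ} (R : Matrix (Fin N) (Fin N) ℂ[X]) (y : ℕ → Fin N → ℂ) :
    polyAct R y = polyActR R y := by
  funext t i
  simp only [polyAct, polyActR, aeval_shiftE_apply]

end SecAux
end SecAuxSec

/-- Theorem 5: if the behavior of Σ is the kernel of `R(σ)`, then `δ(Σ)` is the
smallest `L ∈ {1,…,N}` for which some column submatrix `R_J(ξ)` with `|J| = L`
is not left unimodular (has no polynomial left inverse). -/
theorem secIndex_eq_min_not_left_unimodular {n N : ℕ} (A : Matrix (Fin n) (Fin n) ℂ)
    (C : Matrix (Fin N) (Fin n) ℂ) (hobs : Observable A C)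
    (R : Matrix (Fin N) (Fin N) (Polynomial ℂ))
    (hR : behavior A C = {y : ℕ → Fin N → ℂ | polyAct R y = 0}) :
    secIndex A C =
      sInf {L : ℕ | 1 ≤ L ∧ ∃ J : Finset (Fin N), J.card = L ∧
        ¬ ∃ S : Matrix {j : Fin N // j ∈ J} (Fin N) (Polynomial ℂ),
            S * R.submatrix id (Subtype.val : {j : Fin N // j ∈ J} → Fin N) = 1} := by
  classical
  have dir1 : ∀ w ∈ {w : ℕ | ∃ y ∈ behavior A C, y ≠ 0 ∧ w = weight y},
      w ∈ {L : ℕ | 1 ≤ L ∧ ∃ J : Finset (Fin N), J.card = L ∧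
        ¬ ∃ S : Matrix {j : Fin N // j ∈ J} (Fin N) (Polynomial ℂ),
            S * R.submatrix id (Subtype.val : {j : Fin N // j ∈ J} → Fin N) = 1} := by
    rintro w ⟨y, hyB, hy0, rfl⟩
    have hker : polyAct R y = 0 := by
      have h := hR ▸ hyB
      exact h
    have hfin : {i : Fin N | ∃ t, y t i ≠ 0}.Finite := Set.toFinite _
    set J : Finset (Fin N) := hfin.toFinset with hJ
    have hmem : ∀ i, i ∈ J ↔ ∃ t, y t i ≠ 0 := fun i => hfin.mem_toFinset
    have hw : weight y = J.card := Set.ncard_eq_toFinset_card _ hfin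
    constructor
    · obtain ⟨t, i, hti⟩ : ∃ t i, y t i ≠ 0 := by
        by_contra hcon
        push_neg at hcon
        exact hy0 (funext fun t => funext fun i => hcon t i)
      rw [hw]
      exact Finset.card_pos.2 ⟨i, (hmem i).2 ⟨t, hti⟩⟩
    · refine ⟨J, hw.symm, ?_⟩
      rintro ⟨S, hS⟩
      set Msub := R.submatrix id (Subtype.val : {j : Fin N // j ∈ J} → Fin N) with hM
      set yt : ℕ → {j : Fin N // j ∈ J} → ℂ := fun t j => y t j.1 with hyt
      have hMyt : SecAux.polyActR Msub yt = 0 := by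
        have h1 : SecAux.polyActR Msub yt = SecAux.polyActR R y := by
          funext t i
          have hzero : ∀ j : Fin N, j ∉ J →
              (Polynomial.aeval SecAux.shiftE (R i j)) (fun s => y s j) t = 0 := by
            intro j hj
            have hyj : (fun s => y s j) = (0 : ℕ → ℂ) := funext fun s => by
              by_contra hne
              exact hj ((hmem j).2 ⟨s, hne⟩)
            rw [hyj, map_zero]
            rfl
          calc SecAux.polyActR Msub yt t i
              = ∑ j ∈ J.attach,
                  (Polynomial.aeval SecAux.shiftE (R i j.1)) (fun s => y s j.1) t := rfl
            _ = ∑ j ∈ J, (Polynomial.aeval SecAux.shiftE (R i j)) (fun s => y s j) t :=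
                Finset.sum_attach J
                  (fun j => (Polynomial.aeval SecAux.shiftE (R i j)) (fun s => y s j) t)
            _ = ∑ j : Fin N, (Polynomial.aeval SecAux.shiftE (R i j)) (fun s => y s j) t :=
                Finset.sum_subset (Finset.subset_univ J) (fun j _ hj => hzero j hj)
            _ = SecAux.polyActR R y t i := rfl
        rw [h1, ← SecAux.polyAct_eq, hker]
      have hyt0 : yt = 0 := by
        calc yt = SecAux.polyActR 1 yt := (SecAux.polyActR_one yt).symm
          _ = SecAux.polyActR (S * Msub) yt := by rw [hS]
          _ = SecAux.polyActR S (SecAux.polyActR Msub yt) := SecAux.polyActR_mul ..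
          _ = 0 := by rw [hMyt, SecAux.polyActR_zero]
      apply hy0
      funext t i
      show y t i = 0
      by_cases hi : i ∈ J
      · exact congrFun (congrFun hyt0 t) ⟨i, hi⟩
      · by_contra hne
        exact hi ((hmem i).2 ⟨t, hne⟩)
  have dir2 : ∀ L ∈ {L : ℕ | 1 ≤ L ∧ ∃ J : Finset (Fin N), J.card = L ∧
        ¬ ∃ S : Matrix {j : Fin N // j ∈ J} (Fin N) (Polynomial ℂ),
            S * R.submatrix id (Subtype.val : {j : Fin N // j ∈ J} → Fin N) = 1},
      ∃ w ∈ {w : ℕ | ∃ y ∈ behavior A C, y ≠ 0 ∧ w = weight y}, w ≤ L := by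
    rintro L ⟨hL1, J, hJcard, hnot⟩
    rcases SecAux.left_inv_or_zero
        (R.submatrix id (Subtype.val : {j : Fin N // j ∈ J} → Fin N)) with
      hleft | ⟨l, v, hv0, hker⟩
    · exact absurd hleft hnot
    · set Msub := R.submatrix id (Subtype.val : {j : Fin N // j ∈ J} → Fin N) with hM
      set vf : Fin N → ℂ := fun i => if h : i ∈ J then v ⟨i, h⟩ else 0 with hvf
      set y : ℕ → Fin N → ℂ := fun t i => l ^ t * vf i with hy
      have hkey : ∀ i : Fin N, ∑ j : Fin N, (R i j).eval l * vf j = 0 := by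
        intro i
        have h3 : ∀ j : {j : Fin N // j ∈ J},
            (R i j.1).eval l * vf j.1 = (Msub.map (Polynomial.eval l)) i j * v j := by
          intro j
          rw [hvf]
          simp only [dif_pos j.2, Subtype.coe_eta, hM, Matrix.map_apply,
            Matrix.submatrix_apply, id_eq]
        calc ∑ j : Fin N, (R i j).eval l * vf j
            = ∑ j ∈ J, (R i j).eval l * vf j := by
              refine (Finset.sum_subset (Finset.subset_univ J) fun j _ hj => ?_).symm
              rw [hvf]
              simp [dif_neg hj]
          _ = ∑ j ∈ J.attach, (R i j.1).eval l * vf j.1 :=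
              (Finset.sum_attach J (fun j => (R i j).eval l * vf j)).symm
          _ = ∑ j : {j : Fin N // j ∈ J}, (Msub.map (Polynomial.eval l)) i j * v j :=
              Finset.sum_congr rfl fun j _ => h3 j
          _ = (Msub.map (Polynomial.eval l)).mulVec v i := rfl
          _ = 0 := congrFun hker i
      have hkerY : polyAct R y = 0 := by
        funext t i
        show ∑ j, (R i j).sum (fun k a => a * y (t + k) j) = 0
        have hterm : ∀ j : Fin N, (R i j).sum (fun k a => a * y (t + k) j)
            = (R i j).eval l * (l ^ t * vf j) := fun j => SecAux.sum_exp ..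
        calc ∑ j, (R i j).sum (fun k a => a * y (t + k) j)
            = ∑ j, (R i j).eval l * (l ^ t * vf j) := Finset.sum_congr rfl fun j _ => hterm j
          _ = l ^ t * ∑ j, (R i j).eval l * vf j := by
              rw [Finset.mul_sum]
              exact Finset.sum_congr rfl fun j _ => by ring
          _ = 0 := by rw [hkey i, mul_zero]
      have hyB : y ∈ behavior A C := by
        rw [hR]
        exact hkerY
      have hy0 : y ≠ 0 := by
        obtain ⟨j, hj⟩ := Function.ne_iff.1 hv0
        intro h0
        apply hj
        show v j = 0
        have hvfj : vf j.1 = v j := by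
          simp only [hvf]
          rw [dif_pos j.2, Subtype.coe_eta]
        rw [← hvfj]
        have := congrFun (congrFun h0 0) j.1
        simpa [hy] using this
      have hwle : weight y ≤ L := by
        have hsub : {i : Fin N | ∃ t, y t i ≠ 0} ⊆ ↑J := by
          rintro i ⟨t, hti⟩
          by_contra hiJ
          have hiJ' : i ∉ J := fun h => hiJ (Finset.mem_coe.2 h)
          apply hti
          show l ^ t * vf i = 0
          simp only [hvf]
          rw [dif_neg hiJ', mul_zero]
        calc weight y ≤ (↑J : Set (Fin N)).ncard := Set.ncard_le_ncard hsub (Set.toFinite _)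
          _ = J.card := Set.ncard_coe_finset J
          _ = L := hJcard
      exact ⟨weight y, ⟨y, hyB, hy0, rfl⟩, hwle⟩
  show sInf {w : ℕ | ∃ y ∈ behavior A C, y ≠ 0 ∧ w = weight y} = _
  rcases Set.eq_empty_or_nonempty {L : ℕ | 1 ≤ L ∧ ∃ J : Finset (Fin N), J.card = L ∧
        ¬ ∃ S : Matrix {j : Fin N // j ∈ J} (Fin N) (Polynomial ℂ),
            S * R.submatrix id (Subtype.val : {j : Fin N // j ∈ J} → Fin N) = 1} with hLe | hLne
  · have hWe : {w : ℕ | ∃ y ∈ behavior A C, y ≠ 0 ∧ w = weight y} = ∅ := by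
      rw [Set.eq_empty_iff_forall_notMem]
      intro w hw
      have := dir1 w hw
      rw [hLe] at this
      exact this
    rw [hWe, hLe]
  · obtain ⟨w, hwW, hwle⟩ := dir2 _ (Nat.sInf_mem hLne)
    refine le_antisymm (le_trans (Nat.sInf_le hwW) hwle) ?_
    exact Nat.sInf_le (dir1 _ (Nat.sInf_mem ⟨w, hwW⟩))
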